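/- MGF bound for the expected capacity consumption (Lemma EC.7): for every λ ∈ ℝ, E[ e^{λ·Σ_{s=1}^T n_s·1(D ≥ s)} ] ≤ e^{σ²λ² + λ·Σ_{s=1}^T n_s·P(D ≥ s)}. -/

import Mathlib

open MeasureTheory Finset

private lemma gsum_nonneg (T : ℕ) (n : ℕ → ℝ) (hn : ∀ s, n s ∈ Set.Icc (0 : ℝ) 1) (d : ℕ) :
    0 ≤ ∑ s ∈ Finset.Icc 1 T, n s * (if s ≤ d then (1 : ℝ) else 0) := by
  refine Finset.sum_nonneg fun s _ => mul_nonneg (hn s).1 ?_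
  split <;> norm_num

private lemma gsum_le (T : ℕ) (n : ℕ → ℝ) (hn : ∀ s, n s ∈ Set.Icc (0 : ℝ) 1) (d : ℕ) :
    ∑ s ∈ Finset.Icc 1 T, n s * (if s ≤ d then (1 : ℝ) else 0) ≤ T := by
  calc ∑ s ∈ Finset.Icc 1 T, n s * (if s ≤ d then (1 : ℝ) else 0)
      ≤ ∑ s ∈ Finset.Icc 1 T, (1 : ℝ) := by
        refine Finset.sum_le_sum fun s _ => ?_
        rcases hn s with ⟨h0, h1⟩
        by_cases h : s ≤ d
        · simpa [h] using h1
        · simp [h]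
    _ = ((Finset.Icc 1 T).card : ℝ) := by rw [Finset.sum_const]; simp
    _ ≤ T := by rw [Nat.card_Icc]; norm_num

private lemma gsum_mono (T : ℕ) (n : ℕ → ℝ) (hn : ∀ s, n s ∈ Set.Icc (0 : ℝ) 1)
    {a b : ℕ} (hab : a ≤ b) :
    ∑ s ∈ Finset.Icc 1 T, n s * (if s ≤ a then (1 : ℝ) else 0)
      ≤ ∑ s ∈ Finset.Icc 1 T, n s * (if s ≤ b then (1 : ℝ) else 0) := by
  refine Finset.sum_le_sum fun s _ => ?_
  refine mul_le_mul_of_nonneg_left ?_ (hn s).1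
  by_cases h : s ≤ a
  · simp [h, h.trans hab]
  · by_cases h' : s ≤ b <;> simp [h, h']

private lemma gsum_sub_le (T : ℕ) (n : ℕ → ℝ) (hn : ∀ s, n s ∈ Set.Icc (0 : ℝ) 1)
    {a b : ℕ} (hab : a ≤ b) :
    (∑ s ∈ Finset.Icc 1 T, n s * (if s ≤ b then (1 : ℝ) else 0))
      - ∑ s ∈ Finset.Icc 1 T, n s * (if s ≤ a then (1 : ℝ) else 0) ≤ (b : ℝ) - a := by
  rw [← Finset.sum_sub_distrib]
  calc ∑ s ∈ Finset.Icc 1 T,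
        (n s * (if s ≤ b then (1 : ℝ) else 0) - n s * (if s ≤ a then (1 : ℝ) else 0))
      ≤ ∑ s ∈ Finset.Icc 1 T, (if s ∈ Finset.Ioc a b then (1 : ℝ) else 0) := by
        refine Finset.sum_le_sum fun s _ => ?_
        rcases hn s with ⟨h0, h1⟩
        by_cases hsa : s ≤ a
        · have hsb : s ≤ b := hsa.trans hab
          simp only [if_pos hsa, if_pos hsb, mul_one, sub_self]
          split <;> norm_num
        · by_cases hsb : s ≤ b
          · simp only [if_pos hsb, if_neg hsa, mul_one, mul_zero, sub_zero]
            rw [if_pos (Finset.mem_Ioc.mpr ⟨by omega, hsb⟩)]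
            exact h1
          · simp only [if_neg hsa, if_neg hsb, mul_zero, sub_self]
            split <;> norm_num
    _ = ∑ s ∈ (Finset.Icc 1 T).filter (· ∈ Finset.Ioc a b), (1 : ℝ) :=
        (Finset.sum_filter _ _).symm
    _ = (((Finset.Icc 1 T).filter (· ∈ Finset.Ioc a b)).card : ℝ) := by
        rw [Finset.sum_const]; simp
    _ ≤ ((Finset.Ioc a b).card : ℝ) := by
        have hsub : (Finset.Icc 1 T).filter (· ∈ Finset.Ioc a b) ⊆ Finset.Ioc a b :=
          fun x hx => (Finset.mem_filter.mp hx).2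
        exact_mod_cast Finset.card_le_card hsub
    _ = (b : ℝ) - a := by
        rw [Nat.card_Ioc, Nat.cast_sub hab]

private lemma gsum_lip (T : ℕ) (n : ℕ → ℝ) (hn : ∀ s, n s ∈ Set.Icc (0 : ℝ) 1) (a b : ℕ) :
    |(∑ s ∈ Finset.Icc 1 T, n s * (if s ≤ a then (1 : ℝ) else 0))
      - ∑ s ∈ Finset.Icc 1 T, n s * (if s ≤ b then (1 : ℝ) else 0)| ≤ |(a : ℝ) - b| := by
  rcases le_total a b with hab | hab
  · have h1 := gsum_mono T n hn hab
    have h2 := gsum_sub_le T n hn hab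
    have hc : ((a : ℝ)) ≤ b := by exact_mod_cast hab
    rw [abs_sub_comm, abs_of_nonneg (by linarith), abs_sub_comm, abs_of_nonneg (by linarith)]
    linarith
  · have h1 := gsum_mono T n hn hab
    have h2 := gsum_sub_le T n hn hab
    have hc : ((b : ℝ)) ≤ a := by exact_mod_cast hab
    rw [abs_of_nonneg (by linarith), abs_of_nonneg (by linarith)]
    linarith

/-- MGF bound for the expected capacity consumption: if the `{1,…,T}`-valued demand `D` is
sub-Gaussian with variance proxy `σ²/200` and `n₁,…,n_T ∈ [0,1]`, then for every real `λ`,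
`E[exp (λ Σ_{s=1}^T n_s 1(D ≥ s))] ≤ exp (σ² λ² + λ Σ_{s=1}^T n_s P(D ≥ s))`. -/
theorem mgf_expected_capacity_consumption
    {Ω : Type*} [MeasurableSpace Ω] (Pr : Measure Ω) [IsProbabilityMeasure Pr]
    (σ : ℝ) (hσ : 0 < σ) (T : ℕ) (hT : 1 ≤ T)
    (D : Ω → ℕ) (hDmeas : Measurable D) (hDrange : ∀ ω, D ω ∈ Finset.Icc 1 T)
    (hsub : ∀ lam : ℝ,
      ∫⁻ ω, ENNReal.ofReal (Real.exp (lam * ((D ω : ℝ) - ∫ ω', (D ω' : ℝ) ∂Pr))) ∂Pr ≤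
        ENNReal.ofReal (Real.exp (σ ^ 2 / 200 * lam ^ 2)))
    (n : ℕ → ℝ) (hn : ∀ s, n s ∈ Set.Icc (0 : ℝ) 1) :
    ∀ lam : ℝ,
      ∫⁻ ω, ENNReal.ofReal
          (Real.exp (lam * ∑ s ∈ Finset.Icc 1 T, n s * (if s ≤ D ω then (1 : ℝ) else 0))) ∂Pr ≤
        ENNReal.ofReal
          (Real.exp (σ ^ 2 * lam ^ 2 +
            lam * ∑ s ∈ Finset.Icc 1 T, n s * (Pr {ω | s ≤ D ω}).toReal)) := by
  intro lam
  classical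
  -- abbreviations
  set g : ℕ → ℝ := fun d => ∑ s ∈ Finset.Icc 1 T, n s * (if s ≤ d then (1 : ℝ) else 0) with hgdef
  have hg0 : ∀ d, 0 ≤ g d := gsum_nonneg T n hn
  have hgT : ∀ d, g d ≤ T := gsum_le T n hn
  have hglip : ∀ a b, |g a - g b| ≤ |(a : ℝ) - b| := gsum_lip T n hn
  have hgabs : ∀ d, |g d| ≤ T := fun d => by rw [abs_of_nonneg (hg0 d)]; exact hgT d
  -- measurability/integrability helpers
  have measD : ∀ h : ℕ → ℝ, Measurable fun ω => h (D ω) :=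
    fun h => measurable_from_top.comp hDmeas
  have intD : ∀ (h : ℕ → ℝ) (C : ℝ), (∀ d, d ∈ Finset.Icc 1 T → |h d| ≤ C) →
      Integrable (fun ω => h (D ω)) Pr :=
    fun h C hC => ⟨(measD h).aestronglyMeasurable,
      HasFiniteIntegral.of_bounded (C := C) (ae_of_all _ fun ω => by
        rw [Real.norm_eq_abs]; exact hC _ (hDrange ω))⟩
  have measD2 : ∀ h : ℕ → ℕ → ℝ, Measurable fun z : Ω × Ω => h (D z.1) (D z.2) :=
    fun h => (measurable_of_countable (fun p : ℕ × ℕ => h p.1 p.2)).comp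
      ((hDmeas.comp measurable_fst).prodMk (hDmeas.comp measurable_snd))
  have intD2 : ∀ (h : ℕ → ℕ → ℝ) (C : ℝ),
      (∀ d1 d2, d1 ∈ Finset.Icc 1 T → d2 ∈ Finset.Icc 1 T → |h d1 d2| ≤ C) →
      Integrable (fun z : Ω × Ω => h (D z.1) (D z.2)) (Pr.prod Pr) :=
    fun h C hC => ⟨(measD2 h).aestronglyMeasurable,
      HasFiniteIntegral.of_bounded (C := C) (ae_of_all _ fun z => by
        rw [Real.norm_eq_abs]; exact hC _ _ (hDrange _) (hDrange _))⟩
  have hdabs : ∀ d : ℕ, d ∈ Finset.Icc 1 T → |(d : ℝ)| ≤ T := fun d hd => by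
    rw [abs_of_nonneg (Nat.cast_nonneg d)]
    exact_mod_cast (Finset.mem_Icc.mp hd).2
  have hDle : ∀ ω, (D ω : ℝ) ≤ T := fun ω => by
    exact_mod_cast (Finset.mem_Icc.mp (hDrange ω)).2
  have hD0 : ∀ ω, (0 : ℝ) ≤ D ω := fun ω => Nat.cast_nonneg _
  -- mean of D
  set m : ℝ := ∫ ω', (D ω' : ℝ) ∂Pr with hmdef
  have intDr : Integrable (fun ω => (D ω : ℝ)) Pr := intD (fun d => (d : ℝ)) T hdabs
  have hm0 : 0 ≤ m := integral_nonneg hD0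
  have hmT : m ≤ T := by
    calc m ≤ ∫ _ω, (T : ℝ) ∂Pr := integral_mono intDr (integrable_const _) hDle
      _ = T := by simp
  -- generic exponential bound
  have hexp : ∀ t B : ℝ, |t| ≤ B → |Real.exp t| ≤ Real.exp B := fun t B h => by
    rw [Real.abs_exp]; exact Real.exp_le_exp.mpr ((le_abs_self t).trans h)
  have hexpg : ∀ (l : ℝ) (d : ℕ), |Real.exp (l * g d)| ≤ Real.exp (|l| * T) := fun l d =>
    hexp _ _ (by rw [abs_mul]; exact mul_le_mul_of_nonneg_left (hgabs d) (abs_nonneg l))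
  have hexpd : ∀ (l : ℝ) (d : ℕ), d ∈ Finset.Icc 1 T →
      |Real.exp (l * (d : ℝ))| ≤ Real.exp (|l| * T) := fun l d hd =>
    hexp _ _ (by rw [abs_mul]; exact mul_le_mul_of_nonneg_left (hdabs d hd) (abs_nonneg l))
  -- sub-Gaussian bound in real-integral form
  have hsubR : ∀ l : ℝ, ∫ ω, Real.exp (l * ((D ω : ℝ) - m)) ∂Pr ≤
      Real.exp (σ ^ 2 / 200 * l ^ 2) := by
    intro l
    have hint : Integrable (fun ω => Real.exp (l * ((D ω : ℝ) - m))) Pr := by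
      refine intD (fun d => Real.exp (l * ((d : ℝ) - m))) (Real.exp (|l| * T)) fun d hd => ?_
      refine hexp _ _ ?_
      rw [abs_mul]
      refine mul_le_mul_of_nonneg_left ?_ (abs_nonneg l)
      have hdT : (d : ℝ) ≤ T := by exact_mod_cast (Finset.mem_Icc.mp hd).2
      have hd0 : (0 : ℝ) ≤ d := Nat.cast_nonneg d
      exact abs_le.mpr ⟨by linarith, by linarith⟩
    have key := hsub l
    rw [← ofReal_integral_eq_lintegral_ofReal hint
      (ae_of_all _ fun ω => Real.exp_nonneg _)] at key
    exact (ENNReal.ofReal_le_ofReal_iff (Real.exp_nonneg _)).mp key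
  -- core integrable functions
  have intX : Integrable (fun ω => g (D ω)) Pr := intD g T fun d _ => hgabs d
  have intExpX : ∀ l : ℝ, Integrable (fun ω => Real.exp (l * g (D ω))) Pr := fun l =>
    intD (fun d => Real.exp (l * g d)) (Real.exp (|l| * T)) fun d _ => hexpg l d
  have intExpD : ∀ l : ℝ, Integrable (fun ω => Real.exp (l * (D ω : ℝ))) Pr := fun l =>
    intD (fun d => Real.exp (l * (d : ℝ))) (Real.exp (|l| * T)) (hexpd l)
  -- the mean of X
  set c : ℝ := ∫ ω, g (D ω) ∂Pr with hcdef
  -- Jensen (tangent line) step : exp (-(lam*c)) ≤ ∫ exp (-lam * X)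
  have jensen : Real.exp (-(lam * c)) ≤ ∫ ω, Real.exp (-lam * g (D ω)) ∂Pr := by
    have hpt : ∀ ω, Real.exp (-(lam * c)) * (1 + (lam * c - lam * g (D ω))) ≤
        Real.exp (-lam * g (D ω)) := by
      intro ω
      have h1 : (lam * c - lam * g (D ω)) + 1 ≤ Real.exp (lam * c - lam * g (D ω)) :=
        Real.add_one_le_exp _
      have h2 : Real.exp (-(lam * c)) * ((lam * c - lam * g (D ω)) + 1) ≤
          Real.exp (-(lam * c)) * Real.exp (lam * c - lam * g (D ω)) :=
        mul_le_mul_of_nonneg_left h1 (Real.exp_nonneg _)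
      rw [← Real.exp_add] at h2
      have h3 : -(lam * c) + (lam * c - lam * g (D ω)) = -lam * g (D ω) := by ring
      rw [h3] at h2
      calc Real.exp (-(lam * c)) * (1 + (lam * c - lam * g (D ω)))
          = Real.exp (-(lam * c)) * ((lam * c - lam * g (D ω)) + 1) := by ring
        _ ≤ Real.exp (-lam * g (D ω)) := h2
    have intL : Integrable
        (fun ω => Real.exp (-(lam * c)) * (1 + (lam * c - lam * g (D ω)))) Pr := by
      refine Integrable.const_mul ?_ _
      have : (fun ω => 1 + (lam * c - lam * g (D ω)))
          = fun ω => (1 + lam * c) - lam * g (D ω) := by funext ω; ring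
      rw [this]
      exact (integrable_const _).sub (intX.const_mul lam)
    have hInt := integral_mono intL (intExpX (-lam)) hpt
    calc Real.exp (-(lam * c))
        = ∫ ω, Real.exp (-(lam * c)) * (1 + (lam * c - lam * g (D ω))) ∂Pr := by
          rw [integral_const_mul]
          have h4 : (fun ω => 1 + (lam * c - lam * g (D ω)))
              = fun ω => (1 + lam * c) - lam * g (D ω) := by funext ω; ring
          rw [h4, integral_sub (integrable_const _) (intX.const_mul lam),
            integral_const, integral_const_mul, ← hcdef]
          simp
      _ ≤ ∫ ω, Real.exp (-lam * g (D ω)) ∂Pr := hInt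
  -- notation for the four one-dimensional integrals
  set Ap : ℝ := ∫ ω, Real.exp (lam * g (D ω)) ∂Pr with hApdef
  set Am : ℝ := ∫ ω, Real.exp (-lam * g (D ω)) ∂Pr with hAmdef
  set Bp : ℝ := ∫ ω, Real.exp (lam * (D ω : ℝ)) ∂Pr with hBpdef
  set Bm : ℝ := ∫ ω, Real.exp (-lam * (D ω : ℝ)) ∂Pr with hBmdef
  have hAp0 : 0 ≤ Ap := integral_nonneg fun ω => Real.exp_nonneg _
  -- integrability on the product space
  have intP : ∀ l : ℝ, Integrable (fun z : Ω × Ω =>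
      Real.exp (l * g (D z.1)) * Real.exp (-l * g (D z.2))) (Pr.prod Pr) := by
    intro l
    refine intD2 (fun d1 d2 => Real.exp (l * g d1) * Real.exp (-l * g d2))
      (Real.exp (|l| * T) * Real.exp (|l| * T)) fun d1 d2 _ _ => ?_
    rw [abs_mul]
    refine mul_le_mul (hexpg l d1) ?_ (abs_nonneg _) (Real.exp_nonneg _)
    have := hexpg (-l) d2
    rwa [abs_neg] at this
  have intPD : ∀ l : ℝ, Integrable (fun z : Ω × Ω =>
      Real.exp (l * (D z.1 : ℝ)) * Real.exp (-l * (D z.2 : ℝ))) (Pr.prod Pr) := by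
    intro l
    refine intD2 (fun d1 d2 => Real.exp (l * (d1 : ℝ)) * Real.exp (-l * (d2 : ℝ)))
      (Real.exp (|l| * T) * Real.exp (|l| * T)) fun d1 d2 h1 h2 => ?_
    rw [abs_mul]
    refine mul_le_mul (hexpd l d1 h1) ?_ (abs_nonneg _) (Real.exp_nonneg _)
    have := hexpd (-l) d2 h2
    rwa [abs_neg] at this
  -- product-measure cosh identity for X
  have coshX : ∫ z : Ω × Ω, Real.cosh (lam * (g (D z.1) - g (D z.2))) ∂(Pr.prod Pr)
      = Ap * Am := by
    have hfe : (fun z : Ω × Ω => Real.cosh (lam * (g (D z.1) - g (D z.2))))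
        = fun z => (Real.exp (lam * g (D z.1)) * Real.exp (-lam * g (D z.2))
            + Real.exp (-lam * g (D z.1)) * Real.exp (lam * g (D z.2))) / 2 := by
      funext z
      rw [Real.cosh_eq, ← Real.exp_add, ← Real.exp_add]
      ring_nf
    rw [hfe]
    have h2 : (fun z : Ω × Ω => Real.exp (-lam * g (D z.1)) * Real.exp (lam * g (D z.2)))
        = fun z => Real.exp ((-lam) * g (D z.1)) * Real.exp (-(-lam) * g (D z.2)) := by
      funext z; ring_nf
    have hP1 : (∫ z : Ω × Ω,
        Real.exp (lam * g (D z.1)) * Real.exp (-lam * g (D z.2)) ∂(Pr.prod Pr))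
        = Ap * Am :=
      integral_prod_mul (fun ω => Real.exp (lam * g (D ω))) (fun ω => Real.exp (-lam * g (D ω)))
    have hP2 : (∫ z : Ω × Ω,
        Real.exp (-lam * g (D z.1)) * Real.exp (lam * g (D z.2)) ∂(Pr.prod Pr))
        = Am * Ap :=
      integral_prod_mul (fun ω => Real.exp (-lam * g (D ω))) (fun ω => Real.exp (lam * g (D ω)))
    rw [integral_div, integral_add (intP lam) (by rw [h2]; exact intP (-lam)), hP1, hP2]
    ring
  -- product-measure cosh identity for D
  have coshD : ∫ z : Ω × Ω, Real.cosh (lam * ((D z.1 : ℝ) - (D z.2 : ℝ))) ∂(Pr.prod Pr)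
      = Bp * Bm := by
    have hfe : (fun z : Ω × Ω => Real.cosh (lam * ((D z.1 : ℝ) - (D z.2 : ℝ))))
        = fun z => (Real.exp (lam * (D z.1 : ℝ)) * Real.exp (-lam * (D z.2 : ℝ))
            + Real.exp (-lam * (D z.1 : ℝ)) * Real.exp (lam * (D z.2 : ℝ))) / 2 := by
      funext z
      rw [Real.cosh_eq, ← Real.exp_add, ← Real.exp_add]
      ring_nf
    rw [hfe]
    have h2 : (fun z : Ω × Ω => Real.exp (-lam * (D z.1 : ℝ)) * Real.exp (lam * (D z.2 : ℝ)))
        = fun z => Real.exp ((-lam) * (D z.1 : ℝ)) * Real.exp (-(-lam) * (D z.2 : ℝ)) := by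
      funext z; ring_nf
    have hP1 : (∫ z : Ω × Ω,
        Real.exp (lam * (D z.1 : ℝ)) * Real.exp (-lam * (D z.2 : ℝ)) ∂(Pr.prod Pr))
        = Bp * Bm :=
      integral_prod_mul (fun ω => Real.exp (lam * (D ω : ℝ)))
        (fun ω => Real.exp (-lam * (D ω : ℝ)))
    have hP2 : (∫ z : Ω × Ω,
        Real.exp (-lam * (D z.1 : ℝ)) * Real.exp (lam * (D z.2 : ℝ)) ∂(Pr.prod Pr))
        = Bm * Bp :=
      integral_prod_mul (fun ω => Real.exp (-lam * (D ω : ℝ)))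
        (fun ω => Real.exp (lam * (D ω : ℝ)))
    rw [integral_div, integral_add (intPD lam) (by rw [h2]; exact intPD (-lam)), hP1, hP2]
    ring
  -- comparison of the two cosh integrals
  have coshMono : ∫ z : Ω × Ω, Real.cosh (lam * (g (D z.1) - g (D z.2))) ∂(Pr.prod Pr)
      ≤ ∫ z : Ω × Ω, Real.cosh (lam * ((D z.1 : ℝ) - (D z.2 : ℝ))) ∂(Pr.prod Pr) := by
    have hcb : ∀ (t : ℝ), |t| ≤ |lam| * T → |Real.cosh t| ≤ Real.cosh (|lam| * T) := by
      intro t ht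
      rw [abs_of_nonneg (Real.cosh_pos t).le]
      exact Real.cosh_le_cosh.mpr (by rwa [abs_of_nonneg (by positivity : (0:ℝ) ≤ |lam| * T)])
    have intC1 : Integrable
        (fun z : Ω × Ω => Real.cosh (lam * (g (D z.1) - g (D z.2)))) (Pr.prod Pr) := by
      refine intD2 (fun d1 d2 => Real.cosh (lam * (g d1 - g d2)))
        (Real.cosh (|lam| * T)) fun d1 d2 h1 h2 => ?_
      refine hcb _ ?_
      rw [abs_mul]
      refine mul_le_mul_of_nonneg_left ?_ (abs_nonneg _)
      refine (hglip d1 d2).trans ?_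
      have := hdabs d1 h1; have := hdabs d2 h2
      have h1T : (d1 : ℝ) ≤ T := by exact_mod_cast (Finset.mem_Icc.mp h1).2
      have h2T : (d2 : ℝ) ≤ T := by exact_mod_cast (Finset.mem_Icc.mp h2).2
      have h10 : (0 : ℝ) ≤ d1 := Nat.cast_nonneg _
      have h20 : (0 : ℝ) ≤ d2 := Nat.cast_nonneg _
      exact abs_le.mpr ⟨by linarith, by linarith⟩
    have intC2 : Integrable
        (fun z : Ω × Ω => Real.cosh (lam * ((D z.1 : ℝ) - (D z.2 : ℝ)))) (Pr.prod Pr) := by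
      refine intD2 (fun d1 d2 => Real.cosh (lam * ((d1 : ℝ) - (d2 : ℝ))))
        (Real.cosh (|lam| * T)) fun d1 d2 h1 h2 => ?_
      refine hcb _ ?_
      rw [abs_mul]
      refine mul_le_mul_of_nonneg_left ?_ (abs_nonneg _)
      have h1T : (d1 : ℝ) ≤ T := by exact_mod_cast (Finset.mem_Icc.mp h1).2
      have h2T : (d2 : ℝ) ≤ T := by exact_mod_cast (Finset.mem_Icc.mp h2).2
      have h10 : (0 : ℝ) ≤ d1 := Nat.cast_nonneg _
      have h20 : (0 : ℝ) ≤ d2 := Nat.cast_nonneg _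
      exact abs_le.mpr ⟨by linarith, by linarith⟩
    refine integral_mono intC1 intC2 fun z => ?_
    refine Real.cosh_le_cosh.mpr ?_
    rw [abs_mul, abs_mul]
    exact mul_le_mul_of_nonneg_left (hglip _ _) (abs_nonneg _)
  -- bound Bp * Bm via the sub-Gaussian hypothesis
  have hBpm : Bp * Bm ≤ Real.exp (σ ^ 2 / 100 * lam ^ 2) := by
    have hfac : ∀ l : ℝ, (∫ ω, Real.exp (l * (D ω : ℝ)) ∂Pr)
        = Real.exp (l * m) * ∫ ω, Real.exp (l * ((D ω : ℝ) - m)) ∂Pr := by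
      intro l
      rw [← integral_const_mul]
      congr 1; funext ω
      rw [← Real.exp_add]
      congr 1; ring
    have hBp' : Bp ≤ Real.exp (lam * m) * Real.exp (σ ^ 2 / 200 * lam ^ 2) := by
      rw [hBpdef, hfac lam]
      exact mul_le_mul_of_nonneg_left (hsubR lam) (Real.exp_nonneg _)
    have hBm' : Bm ≤ Real.exp (-lam * m) * Real.exp (σ ^ 2 / 200 * lam ^ 2) := by
      rw [hBmdef, hfac (-lam)]
      refine mul_le_mul_of_nonneg_left ?_ (Real.exp_nonneg _)
      have := hsubR (-lam)
      rwa [neg_sq] at this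
    have hBp0 : 0 ≤ Bp := integral_nonneg fun ω => Real.exp_nonneg _
    have hBm0 : 0 ≤ Bm := integral_nonneg fun ω => Real.exp_nonneg _
    calc Bp * Bm ≤ (Real.exp (lam * m) * Real.exp (σ ^ 2 / 200 * lam ^ 2)) *
          (Real.exp (-lam * m) * Real.exp (σ ^ 2 / 200 * lam ^ 2)) :=
        mul_le_mul hBp' hBm' hBm0 (by positivity)
      _ = Real.exp (σ ^ 2 / 100 * lam ^ 2) := by
          rw [← Real.exp_add, ← Real.exp_add, ← Real.exp_add]
          congr 1; ring
  -- factorization of Am * Ap as a product integral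
  have hAmAp : Am * Ap = ∫ z : Ω × Ω,
      Real.cosh (lam * (g (D z.1) - g (D z.2))) ∂(Pr.prod Pr) := by
    rw [coshX]; ring
  -- the real-valued main inequality
  have main : Ap ≤ Real.exp (σ ^ 2 * lam ^ 2 + lam * c) := by
    have step1 : Real.exp (-(lam * c)) * Ap ≤ Am * Ap :=
      mul_le_mul_of_nonneg_right jensen hAp0
    have hchain : Am * Ap ≤ Real.exp (σ ^ 2 / 100 * lam ^ 2) := by
      rw [hAmAp]
      exact coshMono.trans (by rw [coshD]; exact hBpm)
    have step2 : Real.exp (-(lam * c)) * Ap ≤ Real.exp (σ ^ 2 / 100 * lam ^ 2) :=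
      step1.trans hchain
    have h5 : Ap = Real.exp (lam * c) * (Real.exp (-(lam * c)) * Ap) := by
      rw [← mul_assoc, ← Real.exp_add]
      simp
    rw [h5]
    calc Real.exp (lam * c) * (Real.exp (-(lam * c)) * Ap)
        ≤ Real.exp (lam * c) * Real.exp (σ ^ 2 / 100 * lam ^ 2) :=
          mul_le_mul_of_nonneg_left step2 (Real.exp_nonneg _)
      _ = Real.exp (lam * c + σ ^ 2 / 100 * lam ^ 2) := (Real.exp_add _ _).symm
      _ ≤ Real.exp (σ ^ 2 * lam ^ 2 + lam * c) := by
          refine Real.exp_le_exp.mpr ?_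
          nlinarith [sq_nonneg lam, sq_nonneg σ, sq_nonneg (σ * lam)]
  -- identify c with the sum of probabilities
  have hc_eq : c = ∑ s ∈ Finset.Icc 1 T, n s * (Pr {ω | s ≤ D ω}).toReal := by
    rw [hcdef]
    have hintgl : ∀ s ∈ Finset.Icc 1 T,
        Integrable (fun ω => n s * (if s ≤ D ω then (1 : ℝ) else 0)) Pr := by
      intro s _
      refine intD (fun d => n s * (if s ≤ d then (1 : ℝ) else 0)) 1 fun d _ => ?_
      rcases hn s with ⟨h0, h1⟩
      rw [abs_mul]
      by_cases h : s ≤ d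
      · simp only [if_pos h, mul_one]
        rw [abs_of_nonneg h0, abs_of_nonneg (by norm_num : (0:ℝ) ≤ 1)]
        simpa using h1
      · simp [h]
    calc (∫ ω, g (D ω) ∂Pr)
        = ∫ ω, ∑ s ∈ Finset.Icc 1 T, n s * (if s ≤ D ω then (1 : ℝ) else 0) ∂Pr := rfl
      _ = ∑ s ∈ Finset.Icc 1 T, ∫ ω, n s * (if s ≤ D ω then (1 : ℝ) else 0) ∂Pr :=
          integral_finset_sum _ hintgl
      _ = ∑ s ∈ Finset.Icc 1 T, n s * (Pr {ω | s ≤ D ω}).toReal := by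
          refine Finset.sum_congr rfl fun s _ => ?_
          rw [integral_const_mul]
          congr 1
          have hms : MeasurableSet {ω | s ≤ D ω} := hDmeas (by trivial)
          have hind : (fun ω => (if s ≤ D ω then (1 : ℝ) else 0))
              = fun ω => Set.indicator {ω | s ≤ D ω} (fun _ => (1 : ℝ)) ω := by
            funext ω
            rw [Set.indicator_apply]
            simp [Set.mem_setOf_eq]
          rw [hind, integral_indicator_const (1 : ℝ) hms, smul_eq_mul, mul_one, Measure.real]
  -- conclude
  have intExpX' : Integrable
      (fun ω => Real.exp (lam * ∑ s ∈ Finset.Icc 1 T,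
        n s * (if s ≤ D ω then (1 : ℝ) else 0))) Pr := intExpX lam
  rw [← ofReal_integral_eq_lintegral_ofReal intExpX'
    (ae_of_all _ fun ω => Real.exp_nonneg _)]
  refine ENNReal.ofReal_le_ofReal ?_
  have : (∫ ω, Real.exp (lam * ∑ s ∈ Finset.Icc 1 T,
      n s * (if s ≤ D ω then (1 : ℝ) else 0)) ∂Pr) = Ap := hApdef
  rw [this, ← hc_eq]
  exact main
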